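/- arXiv:1905.05611 — 11 statements merged into one kernel-verified Lean document; each statement's English description precedes it below -/
import Mathlib

section
/- For any sequence (p_j) with 0 ≤ p_j ≤ 1, if n is such that R(1,n) = Σ_{j=1}^n r_j ≤ 1, then Q(1,n+1)·R(1,n+1) ≥ Q(1,n)·R(1,n); that is, the optimal value V(n) = Q(1,n)R(1,n) is non-decreasing in n for n ≤ N* := sup{n : R(1,n) ≤ 1}. -/
noncomputable def Rsum (p : ℕ → ℝ) (k n : ℕ) : ℝ := ∑ j ∈ Finset.Icc k n, p j / (1 - p j)

noncomputable def Qprod (p : ℕ → ℝ) (k n : ℕ) : ℝ := ∏ j ∈ Finset.Icc k n, (1 - p j)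

open scoped Classical in
noncomputable def thr (p : ℕ → ℝ) (n : ℕ) : ℕ :=
  if Rsum p 1 n ≤ 1 then 1 else Nat.findGreatest (fun k => 1 ≤ Rsum p k n) n

noncomputable def Val (p : ℕ → ℝ) (n : ℕ) : ℝ := Qprod p (thr p n) n * Rsum p (thr p n) n

theorem stmt_1 (p : ℕ → ℝ) (hp0 : ∀ j, 0 ≤ p j) (hp1 : ∀ j, p j < 1)
    (n : ℕ) (hR : Rsum p 1 n ≤ 1) :
    Qprod p 1 n * Rsum p 1 n ≤ Qprod p 1 (n + 1) * Rsum p 1 (n + 1) := by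
  have hq : (0:ℝ) < 1 - p (n+1) := by linarith [hp1 (n+1)]
  have hQ : 0 ≤ Qprod p 1 n := Finset.prod_nonneg fun j _ => by linarith [hp1 j]
  have hR0 : 0 ≤ Rsum p 1 n :=
    Finset.sum_nonneg fun j _ => div_nonneg (hp0 j) (by linarith [hp1 j])
  have hsum : Rsum p 1 (n+1) = Rsum p 1 n + p (n+1) / (1 - p (n+1)) :=
    Finset.sum_Icc_succ_top (Nat.one_le_iff_ne_zero.mpr (Nat.succ_ne_zero n)) _
  have hprod : Qprod p 1 (n+1) = Qprod p 1 n * (1 - p (n+1)) :=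
    Finset.prod_Icc_succ_top (Nat.one_le_iff_ne_zero.mpr (Nat.succ_ne_zero n)) _
  rw [hsum, hprod]
  have key : (1 - p (n+1)) * (Rsum p 1 n + p (n+1) / (1 - p (n+1)))
      = Rsum p 1 n + p (n+1) * (1 - Rsum p 1 n) := by
    field_simp
    ring
  have hp0' := hp0 (n+1)
  nlinarith [mul_nonneg hQ (mul_nonneg hp0' (by linarith : (0:ℝ) ≤ 1 - Rsum p 1 n))]
end

section
/- If the sequence of probabilities (p_j) is non-increasing, then the optimal threshold satisfies: s(n+1) ∈ {s(n), s(n)+1} for every n. -/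
lemma r_nonneg (p : ℕ → ℝ) (hp0 : ∀ j, 0 ≤ p j) (hp1 : ∀ j, p j < 1) (j : ℕ) :
    0 ≤ p j / (1 - p j) :=
  div_nonneg (hp0 j) (by linarith [hp1 j])

lemma r_mono (p : ℕ → ℝ) (hp0 : ∀ j, 0 ≤ p j) (hp1 : ∀ j, p j < 1)
    (hmono : ∀ j, p (j + 1) ≤ p j) {a b : ℕ} (h : a ≤ b) :
    p b / (1 - p b) ≤ p a / (1 - p a) := by
  have hpa : Antitone p := antitone_nat_of_succ_le hmono
  have hba : p b ≤ p a := hpa h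
  rw [div_le_div_iff₀ (by linarith [hp1 b]) (by linarith [hp1 a])]
  nlinarith [hp0 a, hp0 b, hp1 a, hp1 b]

lemma Rsum_top (p : ℕ → ℝ) {k n : ℕ} (h : k ≤ n + 1) :
    Rsum p k (n + 1) = Rsum p k n + p (n + 1) / (1 - p (n + 1)) := by
  unfold Rsum
  rw [Finset.sum_Icc_succ_top h]

lemma Rsum_bot (p : ℕ → ℝ) {k n : ℕ} (h : k ≤ n) :
    Rsum p k n = p k / (1 - p k) + Rsum p (k + 1) n := by
  unfold Rsum
  have he : Finset.Icc k n = insert k (Finset.Icc (k + 1) n) := by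
    ext x; simp only [Finset.mem_insert, Finset.mem_Icc]; omega
  rw [he, Finset.sum_insert (by simp only [Finset.mem_Icc]; omega)]

lemma Rsum_anti (p : ℕ → ℝ) (hp0 : ∀ j, 0 ≤ p j) (hp1 : ∀ j, p j < 1)
    {j k n : ℕ} (h : j ≤ k) : Rsum p k n ≤ Rsum p j n :=
  Finset.sum_le_sum_of_subset_of_nonneg (Finset.Icc_subset_Icc_left h)
    (fun i _ _ => r_nonneg p hp0 hp1 i)

theorem stmt_2 (p : ℕ → ℝ) (hp0 : ∀ j, 0 ≤ p j) (hp1 : ∀ j, p j < 1)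
    (hmono : ∀ j, p (j + 1) ≤ p j) (n : ℕ) :
    thr p (n + 1) = thr p n ∨ thr p (n + 1) = thr p n + 1 := by
  classical
  have hr0 : ∀ j, 0 ≤ p j / (1 - p j) := r_nonneg p hp0 hp1
  have htop : ∀ k, k ≤ n + 1 →
      Rsum p k (n + 1) = Rsum p k n + p (n + 1) / (1 - p (n + 1)) :=
    fun k h => Rsum_top p h
  by_cases h1 : Rsum p 1 (n + 1) ≤ 1
  · have h2 : Rsum p 1 n ≤ 1 := by
      have := htop 1 (by omega)
      have := hr0 (n + 1)
      linarith
    left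
    rw [thr, thr, if_pos h1, if_pos h2]
  · by_cases h2 : Rsum p 1 n ≤ 1
    · have hrpos : 0 < p (n + 1) / (1 - p (n + 1)) := by
        have := htop 1 (by omega)
        push_neg at h1
        linarith
      have hs'le : Nat.findGreatest (fun k => 1 ≤ Rsum p k (n + 1)) (n + 1) ≤ 2 := by
        by_contra hc
        push_neg at hc
        set s' := Nat.findGreatest (fun k => 1 ≤ Rsum p k (n + 1)) (n + 1) with hs'
        have hP : 1 ≤ Rsum p s' (n + 1) :=
          Nat.findGreatest_of_ne_zero hs'.symm (by omega)
        have hle : s' ≤ n + 1 := Nat.findGreatest_le _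
        have hn2 : 2 ≤ n := by omega
        have e1 : Rsum p 1 n = p 1 / (1 - p 1) + Rsum p 2 n := Rsum_bot p (by omega)
        have e2 : Rsum p 2 n = p 2 / (1 - p 2) + Rsum p 3 n := Rsum_bot p (by omega)
        have e3 := htop 3 (by omega)
        have hmono1 : p (n + 1) / (1 - p (n + 1)) ≤ p 1 / (1 - p 1) :=
          r_mono p hp0 hp1 hmono (by omega)
        have hanti : Rsum p s' (n + 1) ≤ Rsum p 3 (n + 1) :=
          Rsum_anti p hp0 hp1 (by omega)
        have hmono2 : p (n + 1) / (1 - p (n + 1)) ≤ p 2 / (1 - p 2) :=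
          r_mono p hp0 hp1 hmono (by omega)
        linarith
      have hs'ge : 1 ≤ Nat.findGreatest (fun k => 1 ≤ Rsum p k (n + 1)) (n + 1) :=
        Nat.le_findGreatest (by omega) (by push_neg at h1; exact le_of_lt h1)
      rw [thr, thr, if_neg h1, if_pos h2]
      omega
    · push_neg at h1 h2
      have hn1 : 1 ≤ n := by
        by_contra hc
        have hn0 : n = 0 := by omega
        have : Rsum p 1 n = 0 := by simp [Rsum, hn0]
        linarith
      set s := Nat.findGreatest (fun k => 1 ≤ Rsum p k n) n with hs
      set s' := Nat.findGreatest (fun k => 1 ≤ Rsum p k (n + 1)) (n + 1) with hs'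
      have hsge : 1 ≤ s := Nat.le_findGreatest hn1 (le_of_lt h2)
      have hsle : s ≤ n := Nat.findGreatest_le _
      have hPs : 1 ≤ Rsum p s n := Nat.findGreatest_of_ne_zero hs.symm (by omega)
      have hs'ge : s ≤ s' := by
        apply Nat.le_findGreatest (by omega)
        show (1 : ℝ) ≤ Rsum p s (n + 1)
        have := htop s (by omega)
        have := hr0 (n + 1)
        linarith
      have hs'le : s' ≤ s + 1 := by
        by_contra hc
        push_neg at hc
        have hP : 1 ≤ Rsum p s' (n + 1) :=
          Nat.findGreatest_of_ne_zero hs'.symm (by omega)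
        have hle : s' ≤ n + 1 := Nat.findGreatest_le _
        have hnot : ¬ (1 ≤ Rsum p (s' - 1) n) :=
          Nat.findGreatest_is_greatest (P := fun k => 1 ≤ Rsum p k n) (n := n)
            (by omega) (by omega)
        push_neg at hnot
        have e1 : Rsum p (s' - 1) n = p (s' - 1) / (1 - p (s' - 1)) + Rsum p s' n := by
          have := Rsum_bot p (k := s' - 1) (n := n) (by omega)
          rwa [show s' - 1 + 1 = s' by omega] at this
        have e2 := htop s' (by omega)
        have hmono1 : p (n + 1) / (1 - p (n + 1)) ≤ p (s' - 1) / (1 - p (s' - 1)) :=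
          r_mono p hp0 hp1 hmono (by omega)
        linarith
      rw [thr, thr, if_neg (by push_neg; exact h1), if_neg (by push_neg; exact h2)]
      omega
end

section
/- Suppose s(n+1) = s(n) =: s and R(s,n) ≥ 1. Then Q(s,n+1)·R(s,n+1) ≤ Q(s,n)·R(s,n); i.e., if the optimal threshold does not change when passing from the n-problem to the (n+1)-problem, the optimal value does not increase: V(n+1) ≤ V(n). -/
theorem stmt_3 (p : ℕ → ℝ) (hp0 : ∀ j, 0 ≤ p j) (hp1 : ∀ j, p j < 1)
    (n s : ℕ) (hsn : thr p n = s) (hsn1 : thr p (n + 1) = s)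
    (hR : 1 ≤ Rsum p s n) :
    Qprod p s (n + 1) * Rsum p s (n + 1) ≤ Qprod p s n * Rsum p s n := by
  have hsle : s ≤ n + 1 := by
    by_contra h
    push_neg at h
    have : Finset.Icc s n = ∅ := Finset.Icc_eq_empty (by omega)
    simp [Rsum, this] at hR
    linarith
  have hnot : (n + 1) ∉ Finset.Icc s n := by simp
  have hins : Finset.Icc s (n + 1) = insert (n + 1) (Finset.Icc s n) := by
    ext x; simp [Finset.mem_Icc]; omega
  have hq : 0 < 1 - p (n + 1) := by linarith [hp1 (n + 1)]
  have hr : 0 ≤ p (n + 1) / (1 - p (n + 1)) := div_nonneg (hp0 _) hq.le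
  have hQpos : 0 < Qprod p s n :=
    Finset.prod_pos fun j _ => by linarith [hp1 j]
  have hRsplit : Rsum p s (n + 1) = p (n + 1) / (1 - p (n + 1)) + Rsum p s n := by
    rw [Rsum, hins, Finset.sum_insert hnot]; rfl
  have hQsplit : Qprod p s (n + 1) = (1 - p (n + 1)) * Qprod p s n := by
    rw [Qprod, hins, Finset.prod_insert hnot]; rfl
  rw [hRsplit, hQsplit]
  have key : (1 - p (n + 1)) * (p (n + 1) / (1 - p (n + 1)) + Rsum p s n) ≤ Rsum p s n := by
    have : (1 - p (n + 1)) * (p (n + 1) / (1 - p (n + 1))) = p (n + 1) := by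
      field_simp
    rw [mul_add, this]
    nlinarith [hp0 (n + 1)]
  calc (1 - p (n + 1)) * Qprod p s n * (p (n + 1) / (1 - p (n + 1)) + Rsum p s n)
      = Qprod p s n * ((1 - p (n + 1)) * (p (n + 1) / (1 - p (n + 1)) + Rsum p s n)) := by ring
    _ ≤ Qprod p s n * Rsum p s n := by
        exact mul_le_mul_of_nonneg_left key hQpos.le
end

section
/- For fixed n and probabilities p_1,…,p_n ∈ [0,1), the function f(k) = Q(k,n)·R(k,n) is unimodal in k ∈ {1,…,n}: letting s be the optimal threshold (largest k with R(k,n) ≥ 1, or 1 if no such k), f is non-decreasing on {1,…,s} and non-increasing on {s,…,n}. -/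
lemma Icc_eq_insert (k n : ℕ) (h : k ≤ n) :
    Finset.Icc k n = insert k (Finset.Icc (k+1) n) := by
  ext j; simp [Finset.mem_Icc, Finset.mem_insert]; omega

lemma diff_eq (p : ℕ → ℝ) (n k : ℕ) (h : k ≤ n) (hpk : p k < 1) :
    Qprod p (k+1) n * Rsum p (k+1) n - Qprod p k n * Rsum p k n
      = Qprod p (k+1) n * p k * (Rsum p (k+1) n - 1) := by
  have h0 : 1 - p k ≠ 0 := by linarith
  unfold Qprod Rsum
  rw [Icc_eq_insert k n h, Finset.prod_insert (by simp), Finset.sum_insert (by simp)]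
  field_simp
  ring

lemma Qpos (p : ℕ → ℝ) (n k : ℕ) (hp1 : ∀ j, j ≤ n → p j < 1) :
    0 < Qprod p k n := by
  apply Finset.prod_pos
  intro j hj
  simp [Finset.mem_Icc] at hj
  linarith [hp1 j hj.2]

lemma Ranti (p : ℕ → ℝ) (n a b : ℕ) (hab : a ≤ b)
    (hp0 : ∀ j, j ≤ n → 0 ≤ p j) (hp1 : ∀ j, j ≤ n → p j < 1) :
    Rsum p b n ≤ Rsum p a n := by
  apply Finset.sum_le_sum_of_subset_of_nonneg (Finset.Icc_subset_Icc_left hab)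
  intro j hj _
  simp [Finset.mem_Icc] at hj
  exact div_nonneg (hp0 j hj.2) (by linarith [hp1 j hj.2])

theorem stmt_8 (p : ℕ → ℝ) (n : ℕ) (hp0 : ∀ j, j ≤ n → 0 ≤ p j)
    (hp1 : ∀ j, j ≤ n → p j < 1) :
    (∀ k, 1 ≤ k → k < thr p n →
      Qprod p k n * Rsum p k n ≤ Qprod p (k + 1) n * Rsum p (k + 1) n) ∧
    (∀ k, thr p n ≤ k → k < n →
      Qprod p (k + 1) n * Rsum p (k + 1) n ≤ Qprod p k n * Rsum p k n) := by
  classical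
  constructor
  · intro k hk1 hk2
    have hthr : Rsum p 1 n > 1 := by
      by_contra h
      simp only [thr, if_pos (not_lt.mp h)] at hk2
      omega
    have hthr_eq : thr p n = Nat.findGreatest (fun k => 1 ≤ Rsum p k n) n := by
      simp [thr, not_le.mpr hthr]
    have hn1 : 1 ≤ n := by
      by_contra h
      have : Finset.Icc 1 n = ∅ := by rw [Finset.Icc_eq_empty]; omega
      simp [Rsum, this] at hthr; linarith
    have hspec : 1 ≤ Rsum p (thr p n) n := by
      rw [hthr_eq]
      exact Nat.findGreatest_spec (P := fun k => 1 ≤ Rsum p k n) (m := 1) hn1 hthr.le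
    have hle : thr p n ≤ n := by rw [hthr_eq]; exact Nat.findGreatest_le n
    have hkn : k ≤ n := by omega
    have hR : 1 ≤ Rsum p (k+1) n :=
      le_trans hspec (Ranti p n (k+1) (thr p n) (by omega) hp0 hp1)
    have hnn : 0 ≤ Qprod p (k+1) n * p k * (Rsum p (k+1) n - 1) :=
      mul_nonneg (mul_nonneg (Qpos p n (k+1) hp1).le (hp0 k hkn)) (by linarith)
    linarith [diff_eq p n k hkn (hp1 k hkn)]
  · intro k hk1 hk2
    have hkn : k ≤ n := le_of_lt hk2
    have hR : Rsum p (k+1) n ≤ 1 := by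
      by_cases h : Rsum p 1 n ≤ 1
      · exact le_trans (Ranti p n 1 (k+1) (by omega) hp0 hp1) h
      · have hthr_eq : thr p n = Nat.findGreatest (fun k => 1 ≤ Rsum p k n) n := by
          simp [thr, h]
        have := Nat.findGreatest_is_greatest (P := fun k => 1 ≤ Rsum p k n)
          (by omega : Nat.findGreatest (fun k => 1 ≤ Rsum p k n) n < k + 1)
          (by omega : k + 1 ≤ n)
        simpa using le_of_not_ge this
    have hnn : Qprod p (k+1) n * p k * (Rsum p (k+1) n - 1) ≤ 0 :=
      mul_nonpos_of_nonneg_of_nonpos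
        (mul_nonneg (Qpos p n (k+1) hp1).le (hp0 k hkn)) (by linarith)
    linarith [diff_eq p n k hkn (hp1 k hkn)]
end

section
/- For fixed n, two consecutive thresholds s−1 and s both attain the optimal value, i.e. Q(s−1,n)·R(s−1,n) = Q(s,n)·R(s,n), if and only if R(s,n) = 1, provided 0 < p_{s−1} < 1. -/
theorem stmt_9 (p : ℕ → ℝ) (n s : ℕ) (hs : 1 < s) (hsn : s ≤ n)
    (hp0 : ∀ j, j ≤ n → 0 ≤ p j) (hp1 : ∀ j, j ≤ n → p j < 1)
    (hps : 0 < p (s - 1)) :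
    Qprod p (s - 1) n * Rsum p (s - 1) n = Qprod p s n * Rsum p s n ↔ Rsum p s n = 1 := by
  have hIcc : Finset.Icc (s - 1) n = insert (s - 1) (Finset.Icc s n) := by
    ext j; simp only [Finset.mem_Icc, Finset.mem_insert]; omega
  have hnot : s - 1 ∉ Finset.Icc s n := by simp; omega
  have hq : 0 < 1 - p (s - 1) := by
    have := hp1 (s - 1) (by omega); linarith
  have hQ : 0 < Qprod p s n := by
    apply Finset.prod_pos
    intro j hj
    rw [Finset.mem_Icc] at hj
    have := hp1 j hj.2; linarith
  have hQd : Qprod p (s - 1) n = (1 - p (s - 1)) * Qprod p s n := by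
    rw [Qprod, hIcc, Finset.prod_insert hnot]; rfl
  have hRd : Rsum p (s - 1) n = p (s - 1) / (1 - p (s - 1)) + Rsum p s n := by
    rw [Rsum, hIcc, Finset.sum_insert hnot]; rfl
  rw [hQd, hRd]
  set Q := Qprod p s n
  set R := Rsum p s n
  have key : (1 - p (s - 1)) * Q * (p (s - 1) / (1 - p (s - 1)) + R) =
      Q * (p (s - 1) + (1 - p (s - 1)) * R) := by
    field_simp
  rw [key]
  constructor
  · intro h
    have h2 : Q * (p (s - 1) * (1 - R)) = 0 := by ring_nf; nlinarith [h]
    rcases mul_eq_zero.mp h2 with h3 | h3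
    · linarith
    · rcases mul_eq_zero.mp h3 with h4 | h4
      · linarith
      · linarith
  · intro h; rw [h]; ring
end

section
/- Suppose (p_j) ⊂ (0,1) is non-increasing and s(n+1) = s(n) =: s with R(s,n) ≥ 1. Then V(n+1) = V(n) if and only if R(s,n) = 1. -/
theorem stmt_10 (p : ℕ → ℝ) (hp0 : ∀ j, 0 < p j) (hp1 : ∀ j, p j < 1)
    (hmono : ∀ j, p (j + 1) ≤ p j) (n s : ℕ)
    (hsn : thr p n = s) (hsn1 : thr p (n + 1) = s) (hR : 1 ≤ Rsum p s n) :
    Val p (n + 1) = Val p n ↔ Rsum p s n = 1 := by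
  have hsle : s ≤ n := by
    by_contra h
    push_neg at h
    have : Rsum p s n = 0 := by
      unfold Rsum
      rw [Finset.Icc_eq_empty (by omega)]
      simp
    rw [this] at hR; linarith
  have hq : ∀ j, (0:ℝ) < 1 - p j := fun j => by linarith [hp1 j]
  have hQpos : 0 < Qprod p s n := Finset.prod_pos (fun j _ => hq j)
  have hRsucc : Rsum p s (n + 1) = Rsum p s n + p (n+1) / (1 - p (n+1)) :=
    Finset.sum_Icc_succ_top (by omega) _
  have hQsucc : Qprod p s (n + 1) = Qprod p s n * (1 - p (n+1)) :=
    Finset.prod_Icc_succ_top (by omega) _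
  have hkey : (1 - p (n+1)) * (p (n+1) / (1 - p (n+1))) = p (n+1) := by
    rw [mul_comm, div_mul_cancel₀ _ (ne_of_gt (hq (n+1)))]
  have heq : Qprod p s n * (1 - p (n+1)) * (Rsum p s n + p (n+1) / (1 - p (n+1)))
      - Qprod p s n * Rsum p s n = Qprod p s n * (p (n+1) * (1 - Rsum p s n)) := by
    linear_combination Qprod p s n * hkey
  unfold Val
  rw [hsn, hsn1, hRsucc, hQsucc]
  rw [← sub_eq_zero, heq]
  rw [mul_eq_zero, mul_eq_zero]
  constructor
  · rintro (h | h | h)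
    · exact absurd h (ne_of_gt hQpos)
    · exact absurd h (ne_of_gt (hp0 _))
    · linarith
  · intro h
    right; right; linarith
end

section
/- Suppose (p_j) ⊂ (0,1) is non-increasing and s(n+1) = s(n)+1 with s := s(n). Then V(n+1) = V(n) if and only if p_s = p_{n+1} or R(s+1,n) = 1. -/
theorem stmt_11 (p : ℕ → ℝ) (hp0 : ∀ j, 0 < p j) (hp1 : ∀ j, p j < 1)
    (hmono : ∀ j, p (j + 1) ≤ p j) (n s : ℕ)
    (hsn : thr p n = s) (hsn1 : thr p (n + 1) = s + 1) :
    Val p (n + 1) = Val p n ↔ (p s = p (n + 1) ∨ Rsum p (s + 1) n = 1) := by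
  classical
  -- thr p (n+1) ≤ n+1
  have hthr_le : thr p (n + 1) ≤ n + 1 := by
    unfold thr
    split
    · omega
    · exact Nat.findGreatest_le _
  have hsle : s ≤ n := by omega
  set A := Qprod p (s + 1) n with hAdef
  set B := Rsum p (s + 1) n with hBdef
  have hApos : 0 < A := by
    apply Finset.prod_pos
    intro j _
    linarith [hp1 j]
  have hqs : (1 : ℝ) - p s ≠ 0 := by linarith [hp1 s]
  have hqn : (1 : ℝ) - p (n + 1) ≠ 0 := by linarith [hp1 (n + 1)]
  -- split products/sums
  have hIcc : Finset.Icc s n = insert s (Finset.Icc (s + 1) n) := by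
    rw [Finset.Icc_add_one_left_eq_Ioc, Finset.Ioc_insert_left hsle]
  have hnot : s ∉ Finset.Icc (s + 1) n := by simp
  have hQ : Qprod p s n = (1 - p s) * A := by
    rw [hAdef]
    unfold Qprod
    rw [hIcc, Finset.prod_insert hnot]
  have hR : Rsum p s n = p s / (1 - p s) + B := by
    rw [hBdef]
    unfold Rsum
    rw [hIcc, Finset.sum_insert hnot]
  have hQ1 : Qprod p (s + 1) (n + 1) = A * (1 - p (n + 1)) := by
    rw [hAdef]
    unfold Qprod
    rw [Finset.prod_Icc_succ_top (by omega)]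
  have hR1 : Rsum p (s + 1) (n + 1) = B + p (n + 1) / (1 - p (n + 1)) := by
    rw [hBdef]
    unfold Rsum
    rw [Finset.sum_Icc_succ_top (by omega)]
  have hkey : Val p (n + 1) - Val p n = A * (p s - p (n + 1)) * (B - 1) := by
    unfold Val
    rw [hsn, hsn1, hQ, hR, hQ1, hR1]
    field_simp
    ring
  constructor
  · intro h
    have h0 : A * (p s - p (n + 1)) * (B - 1) = 0 := by rw [← hkey, h]; ring
    rcases mul_eq_zero.mp h0 with h1 | h1
    · rcases mul_eq_zero.mp h1 with h2 | h2
      · exact absurd h2 (ne_of_gt hApos)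
      · left; linarith
    · right; linarith
  · intro h
    have h0 : A * (p s - p (n + 1)) * (B - 1) = 0 := by
      rcases h with h | h
      · rw [h]; ring
      · rw [hBdef] at *; rw [h]; ring
    linarith [hkey]
end

section
/- For integers 1 ≤ k < n−1 with n ≥ 3, the difference of harmonic numbers H(n) − H(k) = Σ_{j=k+1}^n 1/j is never a positive integer (in fact it is never an integer when it has at least two summands). -/
open Finset

-- The max 2-adic valuation over (k, n] is attained uniquely; in particular it
-- differs from the valuation of n+1 when appended.
lemma sup_ne_padicValNat_succ {k n : ℕ} (hkn : k < n) :
    (Finset.Ico (k+1) (n+1)).sup (padicValNat 2) ≠ padicValNat 2 (n+1) := by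
  set M := (Finset.Ico (k+1) (n+1)).sup (padicValNat 2) with hM
  intro hEq
  have hne : (Finset.Ico (k+1) (n+1)).Nonempty := ⟨k+1, by simp [Nat.lt_succ_iff, hkn]⟩
  obtain ⟨j, hj, hjM⟩ := Finset.exists_mem_eq_sup _ hne (padicValNat 2)
  rw [Finset.mem_Ico] at hj
  have hj0 : j ≠ 0 := by omega
  have hdvdj : 2 ^ M ∣ j := by
    rw [padicValNat_dvd_iff_le hj0, ← hjM]
  have hnotj : ¬ 2 ^ (M+1) ∣ j := by
    rw [padicValNat_dvd_iff_le hj0, ← hjM]; omega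
  have hdvdn : 2 ^ M ∣ (n+1) := by
    rw [padicValNat_dvd_iff_le (by omega), ← hEq]
  have hnotn : ¬ 2 ^ (M+1) ∣ (n+1) := by
    rw [padicValNat_dvd_iff_le (by omega), ← hEq]; omega
  -- j < n+1 and both divisible by 2^M, so j + 2^M ≤ n+1
  obtain ⟨a, ha⟩ := hdvdj
  obtain ⟨b, hb⟩ := hdvdn
  have hab : a < b := by
    by_contra h
    push_neg at h
    have : n + 1 ≤ j := by
      rw [ha, hb]; exact Nat.mul_le_mul_left _ h
    omega
  have hle : j + 2^M ≤ n + 1 := by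
    rw [ha, hb]
    calc 2^M * a + 2^M = 2^M * (a+1) := by ring
    _ ≤ 2^M * b := Nat.mul_le_mul_left _ hab
  -- a is odd, so a+1 is even and 2^(M+1) ∣ j + 2^M
  have haodd : ¬ 2 ∣ a := by
    intro ⟨c, hc⟩
    exact hnotj ⟨c, by rw [ha, hc]; ring⟩
  have hdvd' : 2 ^ (M+1) ∣ j + 2^M := by
    obtain ⟨c, hc⟩ : 2 ∣ (a+1) := by omega
    exact ⟨c, by rw [ha]; rw [pow_succ]; nlinarith⟩
  rcases eq_or_lt_of_le hle with heq | hlt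
  · exact hnotn (heq ▸ hdvd')
  · -- j + 2^M ∈ Ico (k+1) (n+1), but its valuation exceeds M
    have hmem : j + 2^M ∈ Finset.Ico (k+1) (n+1) := by
      rw [Finset.mem_Ico]
      constructor
      · omega
      · omega
    have hle2 : padicValNat 2 (j + 2^M) ≤ M := hM ▸ Finset.le_sup hmem
    have : M + 1 ≤ padicValNat 2 (j + 2^M) := by
      rwa [← padicValNat_dvd_iff_le (by positivity)]
    omega

lemma harmonic_sub_pos {k n : ℕ} (hkn : k < n) : 0 < harmonic n - harmonic k := by
  induction n with
  | zero => omega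
  | succ n ih =>
    rcases Nat.lt_succ_iff_lt_or_eq.mp hkn with h | rfl
    · have := ih h
      have h2 : (0:ℚ) < ((n:ℚ)+1)⁻¹ := by positivity
      rw [harmonic_succ]
      push_cast
      linarith
    · rw [harmonic_succ]
      have h2 : (0:ℚ) < ((k:ℚ)+1)⁻¹ := by positivity
      push_cast
      linarith

lemma padicValRat_harmonic_sub {k n : ℕ} (hkn : k < n) :
    padicValRat 2 (harmonic n - harmonic k) =
      -(((Finset.Ico (k+1) (n+1)).sup (padicValNat 2) : ℕ) : ℤ) := by
  induction n, Nat.succ_le_of_lt hkn using Nat.le_induction with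
  | base =>
    rw [harmonic_succ, add_sub_cancel_left]
    have : Finset.Ico (k+1) (k+2) = {k+1} := Nat.Ico_succ_singleton (k+1)
    rw [this, Finset.sup_singleton, padicValRat.inv, padicValRat.of_nat]
  | succ n hn ih =>
    have hkn' : k < n := hn
    have hsum : harmonic (n+1) - harmonic k = (harmonic n - harmonic k) + (↑(n+1))⁻¹ := by
      rw [harmonic_succ]; ring
    have h1 : harmonic n - harmonic k ≠ 0 := (harmonic_sub_pos hkn').ne'
    have h2 : ((n+1 : ℕ) : ℚ)⁻¹ ≠ 0 := by positivity
    have h3 : harmonic (n+1) - harmonic k ≠ 0 := (harmonic_sub_pos (by omega)).ne'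
    have hne : padicValRat 2 (harmonic n - harmonic k) ≠ padicValRat 2 ((↑(n+1) : ℚ))⁻¹ := by
      rw [ih hkn', padicValRat.inv, padicValRat.of_nat, Ne, neg_inj, Nat.cast_inj]
      exact sup_ne_padicValNat_succ hkn'
    rw [hsum, padicValRat.add_eq_min (hsum ▸ h3) h1 h2 hne, ih hkn',
      padicValRat.inv, padicValRat.of_nat, min_neg_neg, neg_inj, ← Nat.cast_max, Nat.cast_inj]
    have : Finset.Ico (k+1) (n+1+1) = insert (n+1) (Finset.Ico (k+1) (n+1)) := by
      rw [Nat.Ico_succ_right_eq_insert_Ico (by omega)]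
    rw [this, Finset.sup_insert]
    exact (max_comm _ _)

theorem stmt_14 (k n : ℕ) (hk : 1 ≤ k) (hn : 3 ≤ n) (hkn : k < n - 1) :
    ¬ ∃ z : ℤ, harmonic n - harmonic k = (z : ℚ) := by
  rintro ⟨z, hz⟩
  have hkn' : k < n := by omega
  have hpos := harmonic_sub_pos hkn'
  have hz0 : z ≠ 0 := by
    rintro rfl
    rw [hz] at hpos; simp at hpos
  -- the sup is positive: one of k+1, k+2 is even
  have hMpos : 0 < (Finset.Ico (k+1) (n+1)).sup (padicValNat 2) := by
    obtain ⟨j, hj1, hj2, hj3⟩ : ∃ j, k+1 ≤ j ∧ j < n+1 ∧ 2 ∣ j := by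
      rcases Nat.even_or_odd (k+1) with h | h
      · exact ⟨k+1, le_refl _, by omega, h.two_dvd⟩
      · refine ⟨k+2, by omega, by omega, ?_⟩
        rcases h with ⟨m, hm⟩
        omega
    have hjmem : j ∈ Finset.Ico (k+1) (n+1) := Finset.mem_Ico.mpr ⟨hj1, hj2⟩
    have : 1 ≤ padicValNat 2 j := by
      rw [← padicValNat_dvd_iff_le (by omega)]; simpa using hj3
    exact lt_of_lt_of_le this (Finset.le_sup hjmem)
  have hval := padicValRat_harmonic_sub hkn'
  rw [hz, padicValRat.of_int] at hval
  have : (0:ℤ) ≤ (padicValInt 2 z : ℤ) := Nat.cast_nonneg _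
  omega
end

section
/- In the classical secretary problem (p_j = 1/j), for every n ≥ 3 and every threshold k with 2 ≤ k ≤ n, R(k,n) ≠ 1; consequently the optimal threshold s(n) is unique. -/
noncomputable def Rcsp (k n : ℕ) : ℝ := ∑ j ∈ Finset.Icc k n, (1 : ℝ) / (j - 1)

noncomputable def Qcsp (k n : ℕ) : ℝ := ∏ j ∈ Finset.Icc k n, ((j : ℝ) - 1) / j

open Finset

lemma strict_max_padic {a b m₀ m : ℕ} (ha : 1 ≤ a)
    (hm₀ : m₀ ∈ Finset.Icc a b)
    (hmax : ∀ m ∈ Finset.Icc a b, padicValNat 2 m ≤ padicValNat 2 m₀)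
    (hm : m ∈ Finset.Icc a b) (hne : m ≠ m₀) :
    padicValNat 2 m < padicValNat 2 m₀ := by
  by_contra hlt
  push_neg at hlt
  have heq : padicValNat 2 m = padicValNat 2 m₀ := le_antisymm (hmax m hm) hlt
  set t := padicValNat 2 m₀ with ht
  -- wlog u < v
  rcases Finset.mem_Icc.mp hm with ⟨ham, hmb⟩
  rcases Finset.mem_Icc.mp hm₀ with ⟨ham₀, hm₀b⟩
  set u := min m m₀
  set v := max m m₀
  have huv : u < v := by
    rcases lt_or_gt_of_ne hne with h | h
    · simp [u, v, min_eq_left h.le, max_eq_right h.le, h]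
    · simp [u, v, min_eq_right h.le, max_eq_left h.le, h]
  have hu0 : u ≠ 0 := by omega
  have hv0 : v ≠ 0 := by omega
  have hνu : u.factorization 2 = t := by
    rcases min_choice m m₀ with h | h <;> simp [u, h, Nat.factorization_def _ Nat.prime_two, heq] <;> rfl
  have hνv : v.factorization 2 = t := by
    rcases max_choice m m₀ with h | h <;> simp [v, h, Nat.factorization_def _ Nat.prime_two, heq] <;> rfl
  set c := u / 2 ^ t with hc
  set d := v / 2 ^ t with hd
  have hcu : 2 ^ t * c = u := by
    rw [hc, Nat.mul_div_cancel']; rw [← hνu]; exact Nat.ordProj_dvd u 2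
  have hdv : 2 ^ t * d = v := by
    rw [hd, Nat.mul_div_cancel']; rw [← hνv]; exact Nat.ordProj_dvd v 2
  have hcodd : ¬ 2 ∣ c := by
    have := Nat.not_dvd_ordCompl Nat.prime_two hu0
    rwa [hνu] at this
  have hdodd : ¬ 2 ∣ d := by
    have := Nat.not_dvd_ordCompl Nat.prime_two hv0
    rwa [hνv] at this
  have hcd : c < d := by
    have : 2 ^ t * c < 2 ^ t * d := by rw [hcu, hdv]; exact huv
    exact lt_of_mul_lt_mul_left this (Nat.zero_le _)
  set w := 2 ^ t * (c + 1) with hw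
  have hwmem : w ∈ Finset.Icc a b := by
    refine Finset.mem_Icc.mpr ⟨?_, ?_⟩
    · calc a ≤ u := le_min ham ham₀
        _ ≤ w := by rw [← hcu, hw]; exact Nat.mul_le_mul_left _ (by omega)
    · calc w ≤ v := by rw [← hdv, hw]; exact Nat.mul_le_mul_left _ (by omega)
        _ ≤ b := max_le hmb hm₀b
  have hdvd : 2 ^ (t + 1) ∣ w := by
    have h2 : 2 ∣ c + 1 := by omega
    rw [hw, pow_succ]
    exact mul_dvd_mul dvd_rfl h2
  have hw0 : w ≠ 0 := by positivity
  have : t + 1 ≤ w.factorization 2 :=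
    (Nat.Prime.pow_dvd_iff_le_factorization Nat.prime_two hw0).mp hdvd
  have hle := hmax w hwmem
  rw [Nat.factorization_def _ Nat.prime_two] at this
  omega



lemma qsum_ne_one {a b : ℕ} (ha : 2 ≤ a) (hab : a ≤ b) :
    (∑ m ∈ Finset.Icc a b, (1 : ℚ) / m) ≠ 1 := by
  rcases eq_or_lt_of_le hab with rfl | hlt
  · -- single term 1/a < 1
    rw [Finset.Icc_self, Finset.sum_singleton]
    intro h
    have h2 : (0:ℚ) < a := by positivity
    rw [div_eq_one_iff_eq (by positivity)] at h
    have : (a:ℚ) = 1 := h.symm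
    have : a = 1 := by exact_mod_cast this
    omega
  · -- 2 ≤ a < b : 2-adic valuation argument
    haveI : Fact (Nat.Prime 2) := ⟨Nat.prime_two⟩
    set F : ℕ → ℚ := fun m => 1 / (max m 1) with hF
    have hFpos : ∀ i : ℕ, 0 < F i := by
      intro i; simp only [hF]; positivity
    have hFval : ∀ m : ℕ, 1 ≤ m → padicValRat 2 (F m) = -(padicValNat 2 m : ℤ) := by
      intro m hm
      simp only [hF, max_eq_left hm, one_div]
      rw [padicValRat.inv, padicValRat.of_nat]
    have hFeq : ∀ m ∈ Finset.Icc a b, F m = 1 / m := by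
      intro m hm
      have : 1 ≤ m := le_trans (by omega) (Finset.mem_Icc.mp hm).1
      simp only [hF, max_eq_left this]
    -- the max-valuation element
    obtain ⟨m₀, hm₀, hmax⟩ := Finset.exists_max_image (Finset.Icc a b) (padicValNat 2)
      ⟨a, Finset.mem_Icc.mpr ⟨le_rfl, hab⟩⟩
    have hstrict : ∀ m ∈ Finset.Icc a b, m ≠ m₀ →
        padicValNat 2 m < padicValNat 2 m₀ :=
      fun m hm hne => strict_max_padic (by omega) hm₀ hmax hm hne
    -- m₀'s valuation is ≥ 1 (an even number is in the interval)
    have hν1 : 1 ≤ padicValNat 2 m₀ := by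
      set e := if 2 ∣ a then a else a + 1 with he
      have hemem : e ∈ Finset.Icc a b := by
        refine Finset.mem_Icc.mpr ⟨?_, ?_⟩ <;> (rw [he]; split <;> omega)
      have hedvd : 2 ∣ e := by rw [he]; split <;> omega
      have he0 : e ≠ 0 := by rw [he]; split <;> omega
      calc 1 ≤ padicValNat 2 e := by
              have := (Nat.Prime.pow_dvd_iff_le_factorization Nat.prime_two he0).mp
                (by rwa [pow_one])
              rwa [Nat.factorization_def _ Nat.prime_two] at this
        _ ≤ padicValNat 2 m₀ := hmax e hemem
    -- split off m₀
    set S := (Finset.Icc a b).erase m₀ with hS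
    have hSne : S.Nonempty := by
      rcases Finset.mem_Icc.mp hm₀ with ⟨h1, h2⟩
      rcases eq_or_ne m₀ a with rfl | h
      · exact ⟨b, Finset.mem_erase.mpr ⟨by omega, Finset.mem_Icc.mpr ⟨hab, le_rfl⟩⟩⟩
      · exact ⟨a, Finset.mem_erase.mpr ⟨fun hh => h hh.symm, Finset.mem_Icc.mpr ⟨le_rfl, hab⟩⟩⟩
    have hm₀1 : 1 ≤ m₀ := le_trans (by omega) (Finset.mem_Icc.mp hm₀).1
    have hkey : padicValRat 2 (F m₀) < padicValRat 2 (∑ i ∈ S, F i) := by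
      refine padicValRat.lt_sum_of_lt hSne ?_ hFpos
      intro i hi
      rcases Finset.mem_erase.mp hi with ⟨hne, hi'⟩
      have hi1 : 1 ≤ i := le_trans (by omega) (Finset.mem_Icc.mp hi').1
      rw [hFval m₀ hm₀1, hFval i hi1]
      have := hstrict i hi' hne
      omega
    have hsplit : (∑ m ∈ Finset.Icc a b, (1:ℚ) / m) = F m₀ + ∑ i ∈ S, F i := by
      rw [← Finset.sum_congr rfl hFeq, hS, Finset.add_sum_erase _ F hm₀]
    have hSpos : (0:ℚ) < ∑ i ∈ S, F i :=
      Finset.sum_pos (fun i _ => hFpos i) hSne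
    have hval : padicValRat 2 (∑ m ∈ Finset.Icc a b, (1:ℚ) / m) = padicValRat 2 (F m₀) := by
      rw [hsplit]
      exact padicValRat.add_eq_of_lt (by positivity) (ne_of_gt (hFpos m₀)) (ne_of_gt hSpos) hkey
    intro hcontra
    rw [hcontra, padicValRat.one, hFval m₀ hm₀1] at hval
    omega


lemma Rcsp_cast {k n : ℕ} (hk : 2 ≤ k) (hkn : k ≤ n) :
    Rcsp k n = ((∑ m ∈ Finset.Icc (k-1) (n-1), (1 : ℚ) / m : ℚ) : ℝ) := by
  rw [Rcsp]
  push_cast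
  refine Finset.sum_nbij' (fun j => j - 1) (fun m => m + 1) ?_ ?_ ?_ ?_ ?_
  · intro j hj; rcases Finset.mem_Icc.mp hj with ⟨h1, h2⟩
    exact Finset.mem_Icc.mpr ⟨by omega, by omega⟩
  · intro m hm; rcases Finset.mem_Icc.mp hm with ⟨h1, h2⟩
    exact Finset.mem_Icc.mpr ⟨by omega, by omega⟩
  · intro j hj; rcases Finset.mem_Icc.mp hj with ⟨h1, h2⟩; omega
  · intro m hm; rcases Finset.mem_Icc.mp hm with ⟨h1, h2⟩; omega
  · intro j hj; rcases Finset.mem_Icc.mp hj with ⟨h1, h2⟩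
    have : ((j - 1 : ℕ) : ℝ) = (j : ℝ) - 1 := by
      have : 1 ≤ j := by omega
      push_cast [this]; ring
    rw [this]

lemma Qcsp_eq {k n : ℕ} (hk : 1 ≤ k) (hkn : k ≤ n) :
    Qcsp k n = ((k : ℝ) - 1) / n := by
  induction n, hkn using Nat.le_induction with
  | base => rw [Qcsp, Finset.Icc_self, Finset.prod_singleton]
  | succ n hn ih =>
    have hIcc : Finset.Icc k (n+1) = insert (n+1) (Finset.Icc k n) := by
      rw [← Finset.insert_Icc_right_eq_Icc_add_one (by omega)]
    rw [Qcsp, hIcc, Finset.prod_insert (by simp), ← Qcsp, ih]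
    have hn0' : 0 < n := by omega
    have hn0 : (0:ℝ) < (n:ℝ) := by exact_mod_cast hn0'
    have hn1 : (0:ℝ) < (n : ℝ) + 1 := by linarith
    push_cast
    field_simp
    ring

lemma Rcsp_succ {k n : ℕ} (hk : k ≤ n) :
    Rcsp k n = 1 / ((k : ℝ) - 1) + Rcsp (k+1) n := by
  rw [Rcsp, Rcsp, Finset.Icc_eq_cons_Ioc hk, Finset.sum_cons, Finset.Icc_add_one_left_eq_Ioc]

lemma Rcsp_pos {k n : ℕ} (hk : 2 ≤ k) (hkn : k ≤ n) : 0 < Rcsp k n := by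
  rw [Rcsp]
  refine Finset.sum_pos (fun j hj => ?_) ⟨k, Finset.mem_Icc.mpr ⟨le_rfl, hkn⟩⟩
  rcases Finset.mem_Icc.mp hj with ⟨h1, h2⟩
  have : (1:ℝ) ≤ (j:ℝ) - 1 := by
    have : 2 ≤ j := by omega
    have : (2:ℝ) ≤ (j:ℝ) := by exact_mod_cast this
    linarith
  positivity

lemma Rcsp_anti {k l n : ℕ} (hk : 2 ≤ k) (hkl : k ≤ l) (hln : l ≤ n) :
    Rcsp l n ≤ Rcsp k n := by
  induction l, hkl using Nat.le_induction with
  | base => exact le_rfl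
  | succ l hl ih =>
    have h1 : l ≤ n := by omega
    have := ih h1
    rw [Rcsp_succ h1] at this
    have hpos : 0 ≤ 1 / ((l : ℝ) - 1) := by
      have h2l : 2 ≤ l := by omega
      have h2l' : (2:ℝ) ≤ (l:ℝ) := by exact_mod_cast h2l
      have : (0:ℝ) < (l:ℝ) - 1 := by linarith
      positivity
    linarith

lemma Rcsp_two_gt {n : ℕ} (hn : 3 ≤ n) : 1 < Rcsp 2 n := by
  have hsub : ({2, 3} : Finset ℕ) ⊆ Finset.Icc 2 n := by
    intro x hx; fin_cases hx <;> exact Finset.mem_Icc.mpr ⟨by omega, by omega⟩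
  have hle : ∑ j ∈ ({2,3} : Finset ℕ), (1:ℝ) / (j - 1) ≤ Rcsp 2 n := by
    refine Finset.sum_le_sum_of_subset_of_nonneg hsub (fun j hj _ => ?_)
    rcases Finset.mem_Icc.mp hj with ⟨h1, h2⟩
    have h2j : (2:ℝ) ≤ (j:ℝ) := by exact_mod_cast h1
    have : (1:ℝ) ≤ (j:ℝ) - 1 := by linarith
    positivity
  have : ∑ j ∈ ({2,3} : Finset ℕ), (1:ℝ) / (j - 1) = 1 + 1/2 := by
    norm_num
  linarith

lemma Rcsp_last {n : ℕ} (hn : 3 ≤ n) : Rcsp n n < 1 := by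
  rw [Rcsp, Finset.Icc_self, Finset.sum_singleton]
  have h3 : (3:ℝ) ≤ (n:ℝ) := by exact_mod_cast hn
  rw [div_lt_one (by linarith)]
  linarith

lemma Rcsp_ne_one {n : ℕ} (hn : 3 ≤ n) {k : ℕ} (hk : 2 ≤ k) (hkn : k ≤ n) :
    Rcsp k n ≠ 1 := by
  rcases eq_or_lt_of_le hk with rfl | hk3
  · exact ne_of_gt (Rcsp_two_gt hn)
  · rw [Rcsp_cast hk hkn]
    have h1 : 2 ≤ k - 1 := by omega
    have h2 : k - 1 ≤ n - 1 := by omega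
    have := qsum_ne_one h1 h2
    exact_mod_cast this

theorem stmt_15 (n : ℕ) (hn : 3 ≤ n) :
    (∀ k, 2 ≤ k → k ≤ n → Rcsp k n ≠ 1) ∧
    (∃! k, k ∈ Finset.Icc 1 n ∧
      ∀ j ∈ Finset.Icc 1 n, Qcsp j n * Rcsp j n ≤ Qcsp k n * Rcsp k n) := by
  have hne1 : ∀ k, 2 ≤ k → k ≤ n → Rcsp k n ≠ 1 := fun k hk hkn => Rcsp_ne_one hn hk hkn
  refine ⟨hne1, ?_⟩
  set g : ℕ → ℝ := fun k => Qcsp k n * Rcsp k n with hg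
  have hn0 : (0:ℝ) < (n:ℝ) := by
    have : 0 < n := by omega
    exact_mod_cast this
  -- step difference
  have hstep : ∀ k, 2 ≤ k → k + 1 ≤ n →
      g (k+1) - g k = (Rcsp (k+1) n - 1) / n := by
    intro k hk hk1
    have hkn : k ≤ n := by omega
    have e1 : g (k+1) = ((k:ℝ)) / n * Rcsp (k+1) n := by
      simp only [hg]
      rw [Qcsp_eq (by omega) hk1]
      push_cast; ring
    have e2 : g k = ((k:ℝ) - 1) / n * (1 / ((k:ℝ) - 1) + Rcsp (k+1) n) := by
      simp only [hg]
      rw [Qcsp_eq (by omega) hkn, Rcsp_succ hkn]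
    have hk1' : (1:ℝ) ≤ (k:ℝ) - 1 := by
      have : (2:ℝ) ≤ (k:ℝ) := by exact_mod_cast hk
      linarith
    rw [e1, e2]
    field_simp
    ring
  -- the threshold s
  set T := (Finset.Icc 2 n).filter (fun k => 1 < Rcsp k n) with hT
  have h2T : 2 ∈ T := by
    refine Finset.mem_filter.mpr ⟨Finset.mem_Icc.mpr ⟨le_rfl, by omega⟩, Rcsp_two_gt hn⟩
  have hTne : T.Nonempty := ⟨2, h2T⟩
  set s := T.max' hTne with hs
  have hsT : s ∈ T := T.max'_mem hTne
  rcases Finset.mem_filter.mp hsT with ⟨hsIcc, hsR⟩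
  rcases Finset.mem_Icc.mp hsIcc with ⟨hs2, hsn⟩
  have hsn' : s < n := by
    by_contra h
    have hsn2 : s = n := by omega
    rw [hsn2] at hsR
    exact absurd hsR (not_lt.mpr (le_of_lt (Rcsp_last hn)))
  -- R > 1 below s, R < 1 above s
  have hRbig : ∀ m, 2 ≤ m → m ≤ s → 1 < Rcsp m n := by
    intro m hm hms
    exact lt_of_lt_of_le hsR (Rcsp_anti hm hms hsn)
  have hRsmall : ∀ m, s < m → m ≤ n → Rcsp m n < 1 := by
    intro m hsm hmn
    have hm2 : 2 ≤ m := by omega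
    have : m ∉ T := fun hmT => absurd (T.le_max' m hmT) (by omega)
    have h1 : ¬ 1 < Rcsp m n := fun h => this (Finset.mem_filter.mpr
      ⟨Finset.mem_Icc.mpr ⟨hm2, hmn⟩, h⟩)
    rcases lt_or_eq_of_le (not_lt.mp h1) with h | h
    · exact h
    · exact absurd h (hne1 m hm2 hmn)
  -- strict steps
  have hup : ∀ k, 2 ≤ k → k < s → g k < g (k+1) := by
    intro k hk hks
    have h1 : k + 1 ≤ n := by omega
    have hR := hRbig (k+1) (by omega) (by omega)
    have := hstep k hk h1
    have hpos : 0 < (Rcsp (k+1) n - 1) / n := by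
      apply div_pos; linarith; exact hn0
    linarith
  have hdown : ∀ k, s ≤ k → k < n → g (k+1) < g k := by
    intro k hks hkn
    have hR := hRsmall (k+1) (by omega) (by omega)
    have := hstep k (by omega) (by omega)
    have hneg : (Rcsp (k+1) n - 1) / n < 0 := by
      apply div_neg_of_neg_of_pos; linarith; exact hn0
    linarith
  -- monotone chains
  have hupmono : ∀ k l, 2 ≤ k → k ≤ l → l ≤ s → g k ≤ g l := by
    intro k l hk hkl
    induction l, hkl using Nat.le_induction with
    | base => intro _; exact le_rfl
    | succ l hl ih =>
      intro hls
      have h1 : l ≤ s := by omega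
      exact le_trans (ih h1) (le_of_lt (hup l (by omega) (by omega)))
  have hdownmono : ∀ k l, s ≤ k → k ≤ l → l ≤ n → g l ≤ g k := by
    intro k l hk hkl
    induction l, hkl using Nat.le_induction with
    | base => intro _; exact le_rfl
    | succ l hl ih =>
      intro hln
      have h1 : l ≤ n := by omega
      exact le_trans (le_of_lt (hdown l (by omega) (by omega))) (ih h1)
  have hg1 : g 1 = 0 := by
    simp only [hg]
    rw [Qcsp_eq le_rfl (by omega)]
    norm_num
  have hg2pos : 0 < g 2 := by
    simp only [hg]
    rw [Qcsp_eq (by omega) (by omega)]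
    have hR2 : 0 < Rcsp 2 n := Rcsp_pos le_rfl (by omega)
    have : (0:ℝ) < ((2:ℕ):ℝ) - 1 := by norm_num
    positivity
  -- strict dominance of s over everything else
  have hdom : ∀ j, 1 ≤ j → j ≤ n → j ≠ s → g j < g s := by
    intro j hj hjn hjs
    rcases eq_or_lt_of_le hj with rfl | hj2
    · rw [hg1]
      exact lt_of_lt_of_le hg2pos (hupmono 2 s le_rfl hs2 le_rfl)
    · rcases lt_or_gt_of_ne hjs with h | h
      · exact lt_of_lt_of_le (hup j hj2 h) (hupmono (j+1) s (by omega) (by omega) le_rfl)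
      · exact lt_of_le_of_lt (hdownmono (s+1) j (by omega) (by omega) hjn)
          (hdown s le_rfl hsn')
  refine ⟨s, ⟨Finset.mem_Icc.mpr ⟨by omega, hsn⟩, ?_⟩, ?_⟩
  · intro j hj
    rcases Finset.mem_Icc.mp hj with ⟨h1, h2⟩
    rcases eq_or_ne j s with rfl | h
    · exact le_rfl
    · exact le_of_lt (hdom j h1 h2 h)
  · rintro k ⟨hkmem, hkmax⟩
    rcases Finset.mem_Icc.mp hkmem with ⟨h1, h2⟩
    by_contra hne
    have h3 := hkmax s (Finset.mem_Icc.mpr ⟨by omega, hsn⟩)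
    have h4 := hdom k h1 h2 hne
    simp only [hg] at h3 h4
    linarith
end

section
/- In the classical secretary problem, the optimal win probability V(n) = Q(s(n),n)·R(s(n),n) (with p_j = 1/j) is strictly decreasing in n for n ≥ 3. -/
open Finset

-- factorization at 2 of a product
lemma fact2_prod (s : Finset ℕ) (h : ∀ i ∈ s, i ≠ 0) :
    (∏ i ∈ s, i).factorization 2 = ∑ i ∈ s, (Nat.factorization i) 2 := by
  induction s using Finset.cons_induction with
  | empty => simp
  | cons a s ha ih =>
    rw [Finset.prod_cons, Finset.sum_cons,
      Nat.factorization_mul (h a (Finset.mem_cons_self a s))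
        (Finset.prod_ne_zero_iff.mpr (fun i hi => h i (Finset.mem_cons_of_mem hi)))]
    simp [ih (fun i hi => h i (Finset.mem_cons_of_mem hi))]

-- uniqueness of max 2-adic valuation in an interval
lemma unique_max_val2 {a b i j : ℕ} (ha : 0 < a) (hi : i ∈ Icc a b) (hj : j ∈ Icc a b)
    (hij : i < j) (t : ℕ)
    (hfi : (Nat.factorization i) 2 = t) (hfj : (Nat.factorization j) 2 = t)
    (hmax : ∀ k ∈ Icc a b, (Nat.factorization k) 2 ≤ t) : False := by
  have h2 : (2:ℕ).Prime := Nat.prime_two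
  have hi0 : i ≠ 0 := by have := (mem_Icc.mp hi).1; omega
  have hj0 : j ≠ 0 := by have := (mem_Icc.mp hj).1; omega
  set c := i / 2 ^ t with hc
  set d := j / 2 ^ t with hd
  have hic : 2 ^ t * c = i := by
    have := Nat.ordProj_mul_ordCompl_eq_self i 2; rw [hfi] at this; exact this
  have hjd : 2 ^ t * d = j := by
    have := Nat.ordProj_mul_ordCompl_eq_self j 2; rw [hfj] at this; exact this
  have hcodd : ¬ 2 ∣ c := by
    have := Nat.not_dvd_ordCompl h2 hi0; rwa [hfi] at this
  have hdodd : ¬ 2 ∣ d := by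
    have := Nat.not_dvd_ordCompl h2 hj0; rwa [hfj] at this
  have hcd : c < d := by
    by_contra hcon
    push_neg at hcon
    have : j ≤ i := by rw [← hic, ← hjd]; exact Nat.mul_le_mul_left _ hcon
    omega
  -- k = 2^t*(c+1) is in [i,j] and divisible by 2^(t+1)
  set k := 2 ^ t * (c + 1) with hk
  have hceven : 2 ∣ c + 1 := by omega
  have hkdvd : 2 ^ (t + 1) ∣ k := by
    obtain ⟨e, he⟩ := hceven
    exact ⟨e, by rw [hk, he, pow_succ]; ring⟩
  have hkik : i < k := by
    rw [← hic, hk]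
    have h2t : 0 < 2 ^ t := Nat.pow_pos (by norm_num)
    exact Nat.mul_lt_mul_of_le_of_lt (le_refl _) (by omega) h2t
  have hkj : k ≤ j := by rw [← hjd, hk]; exact Nat.mul_le_mul_left _ (by omega)
  have hkmem : k ∈ Icc a b := by
    rw [mem_Icc] at hi hj ⊢
    omega
  have hk0 : k ≠ 0 := by omega
  have : t + 1 ≤ (Nat.factorization k) 2 :=
    (Nat.Prime.pow_dvd_iff_le_factorization h2 hk0).mp hkdvd
  have := hmax k hkmem
  omega

lemma sum_inv_Icc_ne_one (a b : ℕ) (ha : 2 ≤ a) (hab : a ≤ b) :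
    ∑ i ∈ Icc a b, (1:ℝ)/i ≠ 1 := by
  rcases eq_or_lt_of_le hab with rfl | hlt
  · rw [Icc_self, Finset.sum_singleton]
    have : (2:ℝ) ≤ a := by exact_mod_cast ha
    intro h
    rw [div_eq_one_iff_eq (by linarith)] at h
    linarith
  -- now a < b
  intro heq
  set s := Icc a b with hs
  have hmem0 : ∀ i ∈ s, i ≠ 0 := by
    intro i hi; have := (mem_Icc.mp hi).1; omega
  have hD0 : (∏ i ∈ s, i) ≠ 0 := Finset.prod_ne_zero_iff.mpr hmem0
  set D := ∏ i ∈ s, i with hD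
  set E : ℕ → ℕ := fun i => ∏ j ∈ s.erase i, j with hE
  have hiE : ∀ i ∈ s, i * E i = D := fun i hi => Finset.mul_prod_erase s id hi
  have hsum : ∑ i ∈ s, E i = D := by
    have hcast : ((∑ i ∈ s, E i : ℕ) : ℝ) = ((D : ℕ) : ℝ) := by
      push_cast
      have : ∀ i ∈ s, (E i : ℝ) = (1/i) * D := by
        intro i hi
        have hi0 : (i:ℝ) ≠ 0 := Nat.cast_ne_zero.mpr (hmem0 i hi)
        have := hiE i hi
        have : ((i:ℝ)) * (E i : ℝ) = D := by exact_mod_cast congrArg (Nat.cast (R := ℝ)) this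
        field_simp
        linarith [this]
      rw [Finset.sum_congr rfl this, ← Finset.sum_mul, heq, one_mul]
    exact_mod_cast hcast
  -- 2-adic valuations
  set f : ℕ → ℕ := fun i => (Nat.factorization i) 2 with hf
  set t := s.sup f with ht
  have hne : s.Nonempty := ⟨a, mem_Icc.mpr ⟨le_refl a, le_of_lt hlt⟩⟩
  obtain ⟨m, hm, hmt⟩ := Finset.exists_mem_eq_sup s hne f
  have hmax : ∀ k ∈ s, f k ≤ t := fun k hk => Finset.le_sup hk
  -- t ≥ 1 : there is an even number in [a,b]
  have ht1 : 1 ≤ t := by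
    obtain ⟨e, he, hee⟩ : ∃ e, e ∈ s ∧ 2 ∣ e := by
      rcases Nat.even_or_odd a with h | h
      · exact ⟨a, mem_Icc.mpr ⟨le_refl a, le_of_lt hlt⟩, h.two_dvd⟩
      · refine ⟨a + 1, mem_Icc.mpr ⟨by omega, by omega⟩, ?_⟩
        rcases h with ⟨c, hc⟩; omega
    have he0 : e ≠ 0 := hmem0 e he
    have : 1 ≤ f e := by
      have hp : 2 ^ 1 ∣ e := by simpa using hee
      exact (Nat.Prime.pow_dvd_iff_le_factorization Nat.prime_two he0).mp hp
    exact le_trans this (hmax e he)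
  -- strict max away from m
  have huniq : ∀ i ∈ s, i ≠ m → f i < t := by
    intro i hi him
    rcases lt_or_eq_of_le (hmax i hi) with h | h
    · exact h
    · exfalso
      rcases lt_or_gt_of_ne him with hlt' | hlt'
      · exact unique_max_val2 (by omega) hi hm hlt' t h hmt.symm hmax
      · exact unique_max_val2 (by omega) hm hi hlt' t hmt.symm h hmax
  set T := ∑ i ∈ s, f i with hT
  have hfD : Nat.factorization D 2 = T := fact2_prod s hmem0
  have hfsplit : ∀ i ∈ s, f i + Nat.factorization (E i) 2 = T := by
    intro i hi
    have hEi0 : E i ≠ 0 := Finset.prod_ne_zero_iff.mpr (fun j hj => hmem0 j (Finset.mem_of_mem_erase hj))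
    have := Nat.factorization_mul (hmem0 i hi) hEi0
    have happ : Nat.factorization (i * E i) 2 = f i + Nat.factorization (E i) 2 := by
      rw [this]; rfl
    rw [hiE i hi] at happ
    rw [← happ, hfD]
  have hTt : t ≤ T := by
    have := Finset.single_le_sum (f := f) (fun i _ => Nat.zero_le _) hm
    omega
  set N := T - t + 1 with hN
  have hdvdD : 2 ^ N ∣ D := by
    refine (Nat.Prime.pow_dvd_iff_le_factorization Nat.prime_two hD0).mpr ?_
    rw [hfD]; omega
  have hdvdE : ∀ i ∈ s, i ≠ m → 2 ^ N ∣ E i := by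
    intro i hi him
    have hEi0 : E i ≠ 0 := Finset.prod_ne_zero_iff.mpr (fun j hj => hmem0 j (Finset.mem_of_mem_erase hj))
    refine (Nat.Prime.pow_dvd_iff_le_factorization Nat.prime_two hEi0).mpr ?_
    have h1 := hfsplit i hi
    have h2 := huniq i hi him
    omega
  have hndvdEm : ¬ 2 ^ N ∣ E m := by
    have hEm0 : E m ≠ 0 := Finset.prod_ne_zero_iff.mpr (fun j hj => hmem0 j (Finset.mem_of_mem_erase hj))
    intro hdvd
    have := (Nat.Prime.pow_dvd_iff_le_factorization Nat.prime_two hEm0).mp hdvd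
    have h1 := hfsplit m hm
    omega
  -- contradiction
  have hsplit : E m + ∑ i ∈ s.erase m, E i = D := by
    rw [← hsum, Finset.add_sum_erase s E hm]
  have hdvdrest : 2 ^ N ∣ ∑ i ∈ s.erase m, E i :=
    Finset.dvd_sum (fun i hi => hdvdE i (Finset.mem_of_mem_erase hi) (Finset.ne_of_mem_erase hi))
  have : 2 ^ N ∣ E m := by
    have : E m = D - ∑ i ∈ s.erase m, E i := by omega
    rw [this]
    exact Nat.dvd_sub hdvdD hdvdrest
  exact hndvdEm this

noncomputable def Hsum (k n : ℕ) : ℝ := ∑ j ∈ Finset.Icc k n, 1/((j:ℝ)-1)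

lemma Rsum_eq (p : ℕ → ℝ) (hp : ∀ j, p j = 1 / j) (k n : ℕ) (hk : 1 ≤ k) :
    Rsum p k n = Hsum k n := by
  unfold Rsum Hsum
  refine Finset.sum_congr rfl ?_
  intro j hj
  have hj1 : 1 ≤ j := le_trans hk (mem_Icc.mp hj).1
  rw [hp j]
  rcases eq_or_lt_of_le hj1 with rfl | hj2
  · norm_num
  · have hj2' : (2:ℝ) ≤ j := by exact_mod_cast hj2
    have h0 : (j:ℝ) ≠ 0 := by positivity
    have h1 : (j:ℝ) - 1 ≠ 0 := by linarith
    field_simp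

lemma Hterm_nonneg (j : ℕ) (hj : 1 ≤ j) : 0 ≤ 1/((j:ℝ)-1) := by
  rcases eq_or_lt_of_le hj with rfl | hj2
  · norm_num
  · have h2 : (2:ℝ) ≤ j := by exact_mod_cast hj2
    have : (0:ℝ) < (j:ℝ) - 1 := by linarith
    positivity

lemma Hsum_nonneg (k n : ℕ) (hk : 1 ≤ k) : 0 ≤ Hsum k n := by
  refine Finset.sum_nonneg ?_
  intro j hj
  exact Hterm_nonneg j (le_trans hk (mem_Icc.mp hj).1)

lemma Hsum_anti (k k' n : ℕ) (hk : 1 ≤ k) (hkk : k ≤ k') : Hsum k' n ≤ Hsum k n := by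
  refine Finset.sum_le_sum_of_subset_of_nonneg ?_ ?_
  · exact Finset.Icc_subset_Icc hkk (le_refl n)
  · intro j hj _
    exact Hterm_nonneg j (le_trans hk (mem_Icc.mp hj).1)

lemma Hsum_succ_right (k n : ℕ) (hk : k ≤ n + 1) (hn : 1 ≤ n) :
    Hsum k (n + 1) = Hsum k n + 1/(n:ℝ) := by
  unfold Hsum
  rw [show Finset.Icc k (n+1) = insert (n+1) (Finset.Icc k n) by
    ext x; simp only [Finset.mem_Icc, Finset.mem_insert]; omega]
  rw [Finset.sum_insert (by simp)]
  have : ((n:ℝ) + 1) - 1 = (n:ℝ) := by ring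
  push_cast
  rw [this]
  ring

lemma Hsum_split_left (k n : ℕ) (hk : 1 ≤ k) (hkn : k ≤ n) :
    Hsum k n = 1/((k:ℝ)-1) + Hsum (k+1) n := by
  unfold Hsum
  rw [Finset.Icc_add_one_left_eq_Ioc, ← Finset.Ioc_insert_left hkn, Finset.sum_insert (by simp)]

lemma Hsum_empty (k n : ℕ) (h : n < k) : Hsum k n = 0 := by
  unfold Hsum
  rw [Finset.Icc_eq_empty (by omega), Finset.sum_empty]

lemma Hsum_reindex (k n : ℕ) (hk : 2 ≤ k) (hn : 1 ≤ n) :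
    Hsum k n = ∑ i ∈ Finset.Icc (k-1) (n-1), 1/(i:ℝ) := by
  unfold Hsum
  have hmap : (Finset.Icc (k-1) (n-1)).map (addRightEmbedding 1) = Finset.Icc k n := by
    rw [Finset.map_add_right_Icc]
    congr 1 <;> omega
  rw [← hmap, Finset.sum_map]
  refine Finset.sum_congr rfl ?_
  intro i _
  simp only [addRightEmbedding_apply]
  push_cast
  ring_nf

lemma Hsum_ne_one (k n : ℕ) (hk : 2 ≤ k) (hkn : k ≤ n) (hn : 3 ≤ n) : Hsum k n ≠ 1 := by
  rw [Hsum_reindex k n hk (by omega)]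
  rcases eq_or_lt_of_le hk with rfl | hk3
  · -- k = 2 : sum contains 1/1 and 1/2
    intro heq
    have hsub : Finset.Icc (1:ℕ) 2 ⊆ Finset.Icc (2-1) (n-1) := Finset.Icc_subset_Icc (by omega) (by omega)
    have hle : ∑ i ∈ Finset.Icc (1:ℕ) 2, (1:ℝ)/i ≤ ∑ i ∈ Finset.Icc (2-1) (n-1), (1:ℝ)/i := by
      refine Finset.sum_le_sum_of_subset_of_nonneg hsub ?_
      intro i hi _
      have : 1 ≤ i := by have := (mem_Icc.mp hi).1; omega
      have : (1:ℝ) ≤ i := by exact_mod_cast this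
      positivity
    have : ∑ i ∈ Finset.Icc (1:ℕ) 2, (1:ℝ)/i = 3/2 := by
      rw [show Finset.Icc (1:ℕ) 2 = {1, 2} by rfl]
      norm_num
    rw [this, heq] at hle
    linarith
  · exact sum_inv_Icc_ne_one (k-1) (n-1) (by omega) (by omega)

lemma Qprod_eq (p : ℕ → ℝ) (hp : ∀ j, p j = 1 / j) (k n : ℕ) (hk : 2 ≤ k) (hkn : k ≤ n) :
    Qprod p k n = ((k:ℝ)-1)/n := by
  induction n with
  | zero => omega
  | succ n ih =>
    rcases eq_or_lt_of_le hkn with heq | hlt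
    · -- n + 1 = k : singleton
      unfold Qprod
      rw [← heq, Finset.Icc_self, Finset.prod_singleton, hp]
      have hk0 : (0:ℝ) < (k:ℝ) := by
        have : (2:ℝ) ≤ (k:ℝ) := by exact_mod_cast hk
        linarith
      field_simp
    · have hkn' : k ≤ n := by omega
      have hn0 : (0:ℝ) < (n:ℝ) := by
        have : 2 ≤ n := le_trans hk hkn'
        have : (2:ℝ) ≤ (n:ℝ) := by exact_mod_cast this
        linarith
      have step : Qprod p k (n+1) = Qprod p k n * (1 - p (n+1)) := by
        unfold Qprod
        rw [show Finset.Icc k (n+1) = insert (n+1) (Finset.Icc k n) by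
          ext x; simp only [Finset.mem_Icc, Finset.mem_insert]; omega]
        rw [Finset.prod_insert (by simp), mul_comm]
      rw [step, ih hkn', hp]
      have hn1 : (0:ℝ) < (n:ℝ) + 1 := by linarith
      push_cast
      field_simp
      try ring

lemma thr_eq (p : ℕ → ℝ) (hp : ∀ j, p j = 1 / j) (n : ℕ) (hn : 3 ≤ n) :
    thr p n = Nat.findGreatest (fun k => 1 ≤ Rsum p k n) n := by
  unfold thr
  rw [if_neg]
  push_neg
  rw [Rsum_eq p hp 1 n (le_refl 1)]
  have hsub : Finset.Icc (2:ℕ) 3 ⊆ Finset.Icc 1 n := Finset.Icc_subset_Icc (by omega) (by omega)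
  have hle : ∑ j ∈ Finset.Icc (2:ℕ) 3, 1/((j:ℝ)-1) ≤ Hsum 1 n := by
    unfold Hsum
    refine Finset.sum_le_sum_of_subset_of_nonneg hsub ?_
    intro j hj _
    exact Hterm_nonneg j (mem_Icc.mp hj).1
  have : ∑ j ∈ Finset.Icc (2:ℕ) 3, 1/((j:ℝ)-1) = 3/2 := by
    rw [show Finset.Icc (2:ℕ) 3 = {2, 3} by rfl]
    norm_num
  rw [this] at hle
  linarith

theorem stmt_16 (p : ℕ → ℝ) (hp : ∀ j, p j = 1 / j) (n : ℕ) (hn : 3 ≤ n) :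
    Val p (n + 1) < Val p n := by
  have hn1 : 3 ≤ n + 1 := by omega
  have hthr : thr p n = Nat.findGreatest (fun k => 1 ≤ Rsum p k n) n := thr_eq p hp n hn
  have hthr' : thr p (n+1) = Nat.findGreatest (fun k => 1 ≤ Rsum p k (n+1)) (n+1) :=
    thr_eq p hp (n+1) hn1
  set s := thr p n with hs_def
  set s' := thr p (n+1) with hs'_def
  -- basic facts about s
  have hR2 : 1 ≤ Rsum p 2 n := by
    rw [Rsum_eq p hp 2 n (by omega)]
    have h2mem : 2 ∈ Finset.Icc 2 n := mem_Icc.mpr ⟨le_refl 2, by omega⟩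
    have := Finset.single_le_sum (f := fun j : ℕ => 1/((j:ℝ)-1))
      (fun j hj => Hterm_nonneg j (le_trans (by omega) (mem_Icc.mp hj).1)) h2mem
    unfold Hsum
    refine le_trans (by norm_num) this
  have hs2 : 2 ≤ s := by
    rw [hthr]
    exact Nat.le_findGreatest (by omega) hR2
  have hsn : s ≤ n := by rw [hthr]; exact Nat.findGreatest_le n
  have hRs : 1 ≤ Rsum p s n := by
    exact Nat.findGreatest_of_ne_zero hthr.symm (by omega)
  have hgt : ∀ k, s < k → k ≤ n → Rsum p k n < 1 := by
    intro k hk1 hk2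
    rw [hthr] at hk1
    have := Nat.findGreatest_is_greatest hk1 hk2
    simpa using lt_of_not_ge this
  -- real abbreviations
  set x := Hsum (s+1) n with hx_def
  have hx0 : 0 ≤ x := Hsum_nonneg (s+1) n (by omega)
  have hx1 : x < 1 := by
    rcases eq_or_lt_of_le hsn with heq | hlt
    · rw [hx_def, Hsum_empty (s+1) n (by omega)]; norm_num
    · have := hgt (s+1) (by omega) (by omega)
      rwa [Rsum_eq p hp (s+1) n (by omega)] at this
  have hHs_eq : Hsum s n = 1/((s:ℝ)-1) + x := Hsum_split_left s n (by omega) hsn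
  have hHs1 : 1 < Hsum s n := by
    have hne := Hsum_ne_one s n hs2 hsn hn
    have : 1 ≤ Hsum s n := by rwa [Rsum_eq p hp s n (by omega)] at hRs
    exact lt_of_le_of_ne this (Ne.symm hne)
  have hnR : (3:ℝ) ≤ (n:ℝ) := by exact_mod_cast hn
  have hsR : (2:ℝ) ≤ (s:ℝ) := by exact_mod_cast hs2
  have hsnR : (s:ℝ) ≤ (n:ℝ) := by exact_mod_cast hsn
  -- s ≤ s' ≤ s + 1
  have hHsucc : ∀ k, k ≤ n + 1 → Hsum k (n+1) = Hsum k n + 1/(n:ℝ) :=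
    fun k hk => Hsum_succ_right k n hk (by omega)
  have hs'ge : s ≤ s' := by
    rw [hthr']
    refine Nat.le_findGreatest (by omega) ?_
    rw [Rsum_eq p hp s (n+1) (by omega), hHsucc s (by omega)]
    have : (0:ℝ) < 1/(n:ℝ) := by positivity
    linarith
  have hs'le : s' ≤ s + 1 := by
    by_contra hcon
    push_neg at hcon
    have hs'le' : s' ≤ n + 1 := by rw [hthr']; exact Nat.findGreatest_le (n+1)
    have hs'P : 1 ≤ Rsum p s' (n+1) := by
      exact Nat.findGreatest_of_ne_zero hthr'.symm (by omega)
    rw [Rsum_eq p hp s' (n+1) (by omega)] at hs'P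
    have hanti : Hsum s' (n+1) ≤ Hsum (s+2) (n+1) := Hsum_anti (s+2) s' (n+1) (by omega) (by omega)
    have hsplit : Hsum (s+1) (n+1) = 1/((s:ℝ)+1-1) + Hsum (s+2) (n+1) := by
      have := Hsum_split_left (s+1) (n+1) (by omega) (by omega)
      rw [this]
      push_cast
      ring_nf
    have h1 : Hsum (s+1) (n+1) = x + 1/(n:ℝ) := hHsucc (s+1) (by omega)
    have hsinv : (1:ℝ)/(n:ℝ) ≤ 1/(s:ℝ) := by
      apply one_div_le_one_div_of_le (by linarith) hsnR
    have : Hsum (s+2) (n+1) = x + 1/(n:ℝ) - 1/(s:ℝ) := by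
      rw [← h1] at *
      have : (s:ℝ) + 1 - 1 = (s:ℝ) := by ring
      rw [this] at hsplit
      linarith [hsplit]
    have hlt1 : Hsum (s+2) (n+1) < 1 := by
      rw [this]
      linarith
    linarith [le_trans hs'P hanti]
  -- values
  have hValn : Val p n = ((s:ℝ)-1)/(n:ℝ) * Hsum s n := by
    unfold Val
    rw [← hs_def, Qprod_eq p hp s n hs2 hsn, Rsum_eq p hp s n (by omega)]
  have hcase : s' = s ∨ s' = s + 1 := by omega
  rcases hcase with hcs | hcs
  · -- s' = s
    have hValn1 : Val p (n+1) = ((s:ℝ)-1)/((n:ℝ)+1) * (Hsum s n + 1/(n:ℝ)) := by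
      unfold Val
      rw [← hs'_def, hcs, Qprod_eq p hp s (n+1) hs2 (by omega), Rsum_eq p hp s (n+1) (by omega),
        hHsucc s (by omega)]
      push_cast
      ring
    rw [hValn1, hValn]
    set y := Hsum s n with hy_def
    have hN0 : (0:ℝ) < n := by linarith
    have hN10 : (0:ℝ) < (n:ℝ)+1 := by linarith
    rw [div_mul_eq_mul_div, div_mul_eq_mul_div, div_lt_div_iff₀ hN10 hN0]
    have hinv : (1/(n:ℝ)) * (n:ℝ) = 1 := by field_simp
    nlinarith [mul_pos (by linarith : (0:ℝ) < (s:ℝ)-1) (by linarith : (0:ℝ) < y - 1), hinv]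
  · -- s' = s + 1
    have hValn1 : Val p (n+1) = (s:ℝ)/((n:ℝ)+1) * (x + 1/(n:ℝ)) := by
      unfold Val
      rw [← hs'_def, hcs, Qprod_eq p hp (s+1) (n+1) (by omega) (by omega),
        Rsum_eq p hp (s+1) (n+1) (by omega), hHsucc (s+1) (by omega)]
      push_cast
      ring
    rw [hValn1, hValn, hHs_eq]
    have hN0 : (0:ℝ) < n := by linarith
    have hN10 : (0:ℝ) < (n:ℝ)+1 := by linarith
    have hS1 : (0:ℝ) < (s:ℝ) - 1 := by linarith
    rw [div_mul_eq_mul_div, div_mul_eq_mul_div, div_lt_div_iff₀ hN10 hN0]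
    have hinv : (1/(n:ℝ)) * (n:ℝ) = 1 := by field_simp
    have hinv2 : ((s:ℝ)-1) * (1/((s:ℝ)-1)) = 1 := by field_simp
    nlinarith [mul_pos (by linarith : (0:ℝ) < (n:ℝ)+1-(s:ℝ)) (by linarith : (0:ℝ) < 1 - x),
      hinv, hinv2]
end

section
/- If (p_j) ⊂ (0,1) is non-decreasing and s(n+1) = s(n)+1 with s := s(n), and R(s,n) ≥ 1, then Q(s+1,n+1)·R(s+1,n+1) ≥ Q(s,n)·R(s,n), i.e. V(n+1) ≥ V(n) in this case. -/
lemma Rsum_split_bot (p : ℕ → ℝ) {s n : ℕ} (h : s ≤ n) :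
    Rsum p s n = p s / (1 - p s) + Rsum p (s + 1) n := by
  unfold Rsum
  rw [Finset.Icc_add_one_left_eq_Ioc, ← Finset.Ioc_insert_left h, Finset.sum_insert (by simp)]

lemma Qprod_split_bot (p : ℕ → ℝ) {s n : ℕ} (h : s ≤ n) :
    Qprod p s n = (1 - p s) * Qprod p (s + 1) n := by
  unfold Qprod
  rw [Finset.Icc_add_one_left_eq_Ioc, ← Finset.Ioc_insert_left h, Finset.prod_insert (by simp)]

theorem stmt_18 (p : ℕ → ℝ) (hp0 : ∀ j, 0 < p j) (hp1 : ∀ j, p j < 1)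
    (hmono : ∀ j, p j ≤ p (j + 1)) (n s : ℕ)
    (hsn : thr p n = s) (hsn1 : thr p (n + 1) = s + 1) (hR : 1 ≤ Rsum p s n) :
    Qprod p s n * Rsum p s n ≤ Qprod p (s + 1) (n + 1) * Rsum p (s + 1) (n + 1) := by
  classical
  have hq : ∀ j, (0 : ℝ) < 1 - p j := fun j => by linarith [hp1 j]
  have hpm : Monotone p := monotone_nat_of_le_succ hmono
  have hterm : ∀ j, (0 : ℝ) ≤ p j / (1 - p j) := fun j =>
    le_of_lt (div_pos (hp0 j) (hq j))
  have hthr := hsn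
  rw [thr] at hthr
  -- s ≤ n
  have hsle : s ≤ n := by
    by_cases h : Rsum p 1 n ≤ 1
    · rw [if_pos h] at hthr
      subst hthr
      rcases Nat.eq_zero_or_pos n with rfl | hn
      · exfalso
        have : Rsum p 1 0 = 0 := by
          unfold Rsum
          rw [Finset.Icc_eq_empty (show ¬ (1:ℕ) ≤ 0 by omega)]
          simp
        rw [this] at hR; linarith
      · exact hn
    · rw [if_neg h] at hthr
      exact hthr ▸ Nat.findGreatest_le n
  -- A ≤ 1
  set A := Rsum p (s + 1) n with hA
  have hA1 : A ≤ 1 := by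
    by_cases hcase : s + 1 ≤ n
    · by_cases h : Rsum p 1 n ≤ 1
      · rw [if_pos h] at hthr
        have hs1 : s = 1 := hthr.symm
        subst hs1
        have := Rsum_split_bot p (show 1 ≤ n by omega)
        have hr1 : (0:ℝ) ≤ p 1 / (1 - p 1) := hterm 1
        rw [this] at h
        linarith
      · rw [if_neg h] at hthr
        have hng := Nat.findGreatest_is_greatest
          (show Nat.findGreatest (fun k => 1 ≤ Rsum p k n) n < s + 1 by omega) hcase
        linarith [not_le.mp hng]
    · have : Finset.Icc (s + 1) n = ∅ := Finset.Icc_eq_empty (by omega)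
      simp [hA, Rsum, this]
  set B := Qprod p (s + 1) n with hB
  have hBpos : 0 < B := Finset.prod_pos fun j _ => hq j
  rw [Rsum_split_bot p hsle, Qprod_split_bot p hsle]
  have hRtop : Rsum p (s + 1) (n + 1) = A + p (n + 1) / (1 - p (n + 1)) := by
    unfold Rsum
    rw [Finset.sum_Icc_succ_top (show s + 1 ≤ n + 1 by omega)]
    rfl
  have hQtop : Qprod p (s + 1) (n + 1) = B * (1 - p (n + 1)) := by
    unfold Qprod
    rw [Finset.prod_Icc_succ_top (show s + 1 ≤ n + 1 by omega)]
    rfl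
  rw [hRtop, hQtop]
  have hps : p s ≤ p (n + 1) := hpm (by omega)
  have hne1 : (1 : ℝ) - p s ≠ 0 := ne_of_gt (hq s)
  have hne2 : (1 : ℝ) - p (n + 1) ≠ 0 := ne_of_gt (hq (n + 1))
  have e1 : (1 - p s) * B * (p s / (1 - p s) + A) = B * (p s + (1 - p s) * A) := by
    field_simp
  have e2 : B * (1 - p (n + 1)) * (A + p (n + 1) / (1 - p (n + 1)))
      = B * (p (n + 1) + (1 - p (n + 1)) * A) := by
    field_simp
    ring
  rw [e1, e2]
  have key : p s + (1 - p s) * A ≤ p (n + 1) + (1 - p (n + 1)) * A := by nlinarith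
  exact mul_le_mul_of_nonneg_left key hBpos.le
end
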